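/- Embedding of Besov sequence balls into weak-ℓ^τ: let 0 < p < ∞, 0 < q < ∞, and σ > max(0, 1/p − 1/2); set s = σ + 1/2 − 1/p and τ = 1/(σ + 1/2). Then there is a constant C = C(p,q,σ) such that for every A > 0 and every doubly indexed sequence α = (α_{j,k})_{j ≥ 0, 0 ≤ k < 2^j} with ‖α‖_{b^σ_{p,q}} ≤ A, one has for all ε > 0: card{(j,k) : |α_{j,k}| > ε} ≤ C (A/ε)^{τ}. -/

import Mathlib

open Set

/-- Index set for wavelet-type coefficient sequences of functions on `[0,1]`:
levels `j ≥ 0`, positions `0 ≤ k < 2^j`. -/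
abbrev BesovIdx := (j : ℕ) × Fin (2 ^ j)

/-- The `j`-th level term of the `q`-th power of the Besov sequence norm
`‖α‖_{b^σ_{p,q}} = (∑_j 2^{jsq} (∑_k |α_{j,k}|^p)^{q/p})^{1/q}`,
where `s = σ + 1/2 - 1/p`. -/
noncomputable def besovLevel (p q σ : ℝ) (α : BesovIdx → ℝ) (j : ℕ) : ℝ :=
  (2:ℝ) ^ ((j:ℝ) * (σ + 1/2 - 1/p) * q) *
    (∑ k : Fin (2 ^ j), |α ⟨j, k⟩| ^ p) ^ (q / p)

/-- embedding of Besov sequence balls into weak-`ℓ^τ`: for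
`0 < p < ∞`, `0 < q < ∞`, `σ > max(0, 1/p - 1/2)` and `τ = 1/(σ + 1/2)`,
there is `C = C(p,q,σ)` such that every `α` with `‖α‖_{b^σ_{p,q}} ≤ A`
satisfies `card{(j,k) : |α_{j,k}| > ε} ≤ C (A/ε)^τ` for all `ε > 0`.
(The cardinality bound is expressed by bounding every finite set of such
indices.) -/
theorem besov_weak_ell_tau_embedding (p q σ : ℝ)
    (hp : 0 < p) (hq : 0 < q) (hσ : max 0 (1/p - 1/2) < σ) :
    ∃ C : ℝ, 0 < C ∧ ∀ A : ℝ, 0 < A → ∀ α : BesovIdx → ℝ,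
      Summable (besovLevel p q σ α) →
      (∑' j : ℕ, besovLevel p q σ α j) ^ (1 / q) ≤ A →
      ∀ ε : ℝ, 0 < ε →
        ∀ S : Finset BesovIdx, (∀ i ∈ S, ε < |α i|) →
          (S.card : ℝ) ≤ C * (A / ε) ^ (1 / (σ + 1/2)) := by
  have hσ0 : (0:ℝ) < σ := lt_of_le_of_lt (le_max_left _ _) hσ
  have hσp : 1/p - 1/2 < σ := lt_of_le_of_lt (le_max_right _ _) hσ
  set s : ℝ := σ + 1/2 - 1/p with hs_def
  have hs : 0 < s := by simp only [hs_def]; linarith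
  have hsp : 0 < s * p := mul_pos hs hp
  set r : ℝ := (2:ℝ) ^ (-(s*p)) with hr_def
  have hr0 : 0 < r := Real.rpow_pos_of_pos (by norm_num) _
  have hr1 : r < 1 := Real.rpow_lt_one_of_one_lt_of_neg (by norm_num) (by linarith)
  have h1r : 0 < 1 - r := by linarith
  refine ⟨2 + 1/(1-r), by positivity, ?_⟩
  intro A hA α hsum hnorm ε hε S hS
  set τ : ℝ := 1 / (σ + 1/2) with hτ_def
  have hστ : (0:ℝ) < σ + 1/2 := by linarith
  have hτ0 : 0 < τ := by positivity
  set B : ℝ := (A / ε) ^ τ with hB_def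
  have hB0 : 0 < B := Real.rpow_pos_of_pos (div_pos hA hε) _
  -- per-level sum bound
  have hlev : ∀ j : ℕ, ∑ k : Fin (2^j), |α ⟨j,k⟩| ^ p ≤ A ^ p * r ^ j := by
    intro j
    have hbnn : ∀ i, 0 ≤ besovLevel p q σ α i := by
      intro i
      apply mul_nonneg (Real.rpow_nonneg (by norm_num) _)
      exact Real.rpow_nonneg (Finset.sum_nonneg fun k _ =>
        Real.rpow_nonneg (abs_nonneg _) _) _
    have ht0 : 0 ≤ ∑' j, besovLevel p q σ α j := tsum_nonneg hbnn
    have h1 : besovLevel p q σ α j ≤ A ^ q := by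
      have hle : besovLevel p q σ α j ≤ ∑' i, besovLevel p q σ α i :=
        Summable.le_tsum hsum j (fun i _ => hbnn i)
      have h3 := Real.rpow_le_rpow (Real.rpow_nonneg ht0 _) hnorm hq.le
      rw [← Real.rpow_mul ht0, one_div, inv_mul_cancel₀ hq.ne', Real.rpow_one] at h3
      exact hle.trans h3
    set T : ℝ := ∑ k : Fin (2^j), |α ⟨j,k⟩| ^ p with hT_def
    have hT0 : 0 ≤ T := Finset.sum_nonneg fun k _ => Real.rpow_nonneg (abs_nonneg _) _
    have h2 : (2:ℝ) ^ ((j:ℝ) * s * q) * T ^ (q/p) ≤ A ^ q := h1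
    have hpow : (0:ℝ) < (2:ℝ) ^ ((j:ℝ) * s * q) := Real.rpow_pos_of_pos (by norm_num) _
    have h3 : T ^ (q/p) ≤ A ^ q * (2:ℝ) ^ (-((j:ℝ) * s * q)) := by
      rw [Real.rpow_neg (by norm_num : (0:ℝ) ≤ 2), ← div_eq_mul_inv]
      rw [mul_comm] at h2
      rwa [← le_div_iff₀ hpow] at h2
    have h4 : T ≤ (A ^ q * (2:ℝ) ^ (-((j:ℝ) * s * q))) ^ (p/q) := by
      have := Real.rpow_le_rpow (Real.rpow_nonneg hT0 _) h3 (le_of_lt (div_pos hp hq))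
      rwa [← Real.rpow_mul hT0, div_mul_div_comm, mul_comm q p, div_self (by positivity),
        Real.rpow_one] at this
    calc T ≤ _ := h4
      _ = A ^ p * r ^ j := by
        rw [Real.mul_rpow (Real.rpow_nonneg hA.le _) (Real.rpow_nonneg (by norm_num) _),
          ← Real.rpow_mul hA.le, ← Real.rpow_mul (by norm_num : (0:ℝ) ≤ 2)]
        have e1 : q * (p/q) = p := by field_simp
        have e2 : -((j:ℝ) * s * q) * (p/q) = (-(s*p)) * (j:ℝ) := by
          field_simp
        rw [e1, e2, Real.rpow_mul (by norm_num : (0:ℝ) ≤ 2), Real.rpow_natCast]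
  -- pointwise bound |α i| ≤ A
  have hpt : ∀ i : BesovIdx, |α i| ≤ A := by
    intro ⟨j, k⟩
    by_contra h
    push_neg at h
    have h1 : A ^ p < |α ⟨j,k⟩| ^ p := Real.rpow_lt_rpow hA.le h hp
    have h2 : |α ⟨j,k⟩| ^ p ≤ ∑ k' : Fin (2^j), |α ⟨j,k'⟩| ^ p :=
      Finset.single_le_sum (f := fun k' : Fin (2^j) => |α ⟨j,k'⟩| ^ p)
        (fun k' _ => Real.rpow_nonneg (abs_nonneg _) _) (Finset.mem_univ k)
    have h3 : r ^ j ≤ 1 := pow_le_one₀ hr0.le hr1.le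
    have h4 := hlev j
    nlinarith [Real.rpow_pos_of_pos hA p]
  by_cases hcase : A ≤ ε
  · -- S is empty
    have : S = ∅ := by
      by_contra h
      obtain ⟨i, hi⟩ := Finset.nonempty_iff_ne_empty.mpr h
      exact absurd (hS i hi) (not_lt.mpr ((hpt i).trans hcase))
    simp [this]
    positivity
  push_neg at hcase
  have hAε1 : 1 < A / ε := (one_lt_div hε).mpr hcase
  have hB1 : 1 ≤ B := Real.one_le_rpow hAε1.le hτ0.le
  -- choose j0
  set j0 : ℕ := ⌈Real.logb 2 B⌉₊ with hj0_def
  have hlb0 : 0 ≤ Real.logb 2 B := Real.logb_nonneg (by norm_num) hB1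
  have h2j0 : B ≤ (2:ℝ) ^ (j0:ℕ) := by
    rw [← Real.rpow_natCast]
    calc B = (2:ℝ) ^ Real.logb 2 B := (Real.rpow_logb (by norm_num) (by norm_num) hB0).symm
      _ ≤ _ := Real.rpow_le_rpow_of_exponent_le (by norm_num) (Nat.le_ceil _)
  have h2j0' : ((2:ℝ) ^ (j0:ℕ)) ≤ 2 * B := by
    rw [← Real.rpow_natCast]
    calc (2:ℝ) ^ (j0:ℝ) ≤ (2:ℝ) ^ (Real.logb 2 B + 1) :=
          Real.rpow_le_rpow_of_exponent_le (by norm_num) (Nat.ceil_lt_add_one hlb0).le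
      _ = 2 * B := by
          rw [Real.rpow_add (by norm_num), Real.rpow_logb (by norm_num) (by norm_num) hB0,
            Real.rpow_one]; ring
  set M : ℝ := (A / ε) ^ p with hM_def
  have hM0 : 0 < M := Real.rpow_pos_of_pos (div_pos hA hε) _
  -- per-level count bounds
  have key : ∀ j : ℕ, (((S.filter (fun i => i.1 = j)).card : ℝ) ≤ (2:ℝ)^j)
      ∧ ((S.filter (fun i => i.1 = j)).card : ℝ) ≤ M * r ^ j := by
    intro j
    set f : Fin (2^j) → BesovIdx := fun k => ⟨j, k⟩ with hf_def
    have hfi : Function.Injective f := fun a b h => by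
      simpa [hf_def] using h
    have hsub : S.filter (fun i => i.1 = j) ⊆ Finset.univ.image f := by
      intro i hi
      obtain ⟨j', k⟩ := i
      rw [Finset.mem_filter] at hi
      obtain ⟨-, h⟩ := hi
      dsimp at h
      subst h
      exact Finset.mem_image.mpr ⟨k, Finset.mem_univ _, rfl⟩
    constructor
    · calc ((S.filter (fun i => i.1 = j)).card : ℝ)
          ≤ ((Finset.univ.image f).card : ℝ) := by
            exact_mod_cast Finset.card_le_card hsub
        _ ≤ (2:ℝ)^j := by
            rw [Finset.card_image_of_injective _ hfi]
            simp
    · have hsum1 : ((S.filter (fun i => i.1 = j)).card : ℝ) * ε ^ p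
          ≤ ∑ i ∈ S.filter (fun i => i.1 = j), |α i| ^ p := by
        calc ((S.filter (fun i => i.1 = j)).card : ℝ) * ε ^ p
            = ∑ _i ∈ S.filter (fun i => i.1 = j), ε ^ p := by
              rw [Finset.sum_const, nsmul_eq_mul]
          _ ≤ _ := Finset.sum_le_sum fun i hi =>
              Real.rpow_le_rpow hε.le (hS i (Finset.mem_filter.mp hi).1).le hp.le
      have hsum2 : ∑ i ∈ S.filter (fun i => i.1 = j), |α i| ^ p
          ≤ ∑ k : Fin (2^j), |α ⟨j,k⟩| ^ p := by
        calc _ ≤ ∑ i ∈ Finset.univ.image f, |α i| ^ p :=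
              Finset.sum_le_sum_of_subset_of_nonneg hsub
                (fun i _ _ => Real.rpow_nonneg (abs_nonneg _) _)
          _ = _ := Finset.sum_image (fun a _ b _ h => hfi h)
      have hεp : (0:ℝ) < ε ^ p := Real.rpow_pos_of_pos hε _
      rw [← le_div_iff₀ hεp] at hsum1
      calc ((S.filter (fun i => i.1 = j)).card : ℝ)
          ≤ (∑ i ∈ S.filter (fun i => i.1 = j), |α i| ^ p) / ε ^ p := hsum1
        _ ≤ (A ^ p * r ^ j) / ε ^ p := by
            gcongr
            exact hsum2.trans (hlev j)
        _ = M * r ^ j := by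
            rw [hM_def, Real.div_rpow hA.le hε.le]
            ring
  -- assemble
  set N : ℕ := j0 + (S.sup (fun i => i.1) + 1) with hN_def
  have hfib : S.card = ∑ j ∈ Finset.range N, (S.filter (fun i => i.1 = j)).card := by
    apply Finset.card_eq_sum_card_fiberwise
    intro i hi
    rw [Finset.mem_coe, Finset.mem_range]
    have : i.1 ≤ S.sup (fun i => i.1) := Finset.le_sup hi
    omega
  have hj0N : j0 ≤ N := by omega
  have hsplit : (S.card : ℝ)
      = (∑ j ∈ Finset.Ico 0 j0, ((S.filter (fun i => i.1 = j)).card : ℝ))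
        + ∑ j ∈ Finset.Ico j0 N, ((S.filter (fun i => i.1 = j)).card : ℝ) := by
    rw [Finset.sum_Ico_consecutive _ (Nat.zero_le j0) hj0N, hfib]
    push_cast
    rw [Finset.range_eq_Ico]
  have hpart1 : ∑ j ∈ Finset.Ico 0 j0, ((S.filter (fun i => i.1 = j)).card : ℝ)
      ≤ 2 * B := by
    calc ∑ j ∈ Finset.Ico 0 j0, ((S.filter (fun i => i.1 = j)).card : ℝ)
        ≤ ∑ j ∈ Finset.Ico 0 j0, (2:ℝ)^j :=
          Finset.sum_le_sum fun j _ => (key j).1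
      _ = ((2:ℝ)^(j0:ℕ) - 1)/(2 - 1) := by
          rw [← Finset.range_eq_Ico]
          exact geom_sum_eq (by norm_num) j0
      _ ≤ 2 * B := by
          rw [show ((2:ℝ) - 1) = 1 by norm_num, div_one]
          linarith [h2j0']
  have hMr : M * r ^ j0 ≤ B := by
    have hrj0 : r ^ j0 = ((2:ℝ) ^ (j0:ℕ)) ^ (-(s*p)) := by
      rw [hr_def, ← Real.rpow_natCast ((2:ℝ) ^ (-(s*p))), ← Real.rpow_natCast (2:ℝ) j0,
        ← Real.rpow_mul (by norm_num : (0:ℝ) ≤ 2), ← Real.rpow_mul (by norm_num : (0:ℝ) ≤ 2)]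
      ring_nf
    have h1 : ((2:ℝ) ^ (j0:ℕ)) ^ (-(s*p)) ≤ B ^ (-(s*p)) :=
      Real.rpow_le_rpow_of_nonpos hB0 h2j0 (by linarith)
    have h2 : M * B ^ (-(s*p)) = B := by
      rw [hB_def, hM_def, ← Real.rpow_mul (div_pos hA hε).le,
        ← Real.rpow_add (div_pos hA hε)]
      congr 1
      rw [hτ_def, hs_def]
      field_simp
      ring
    calc M * r ^ j0 = M * ((2:ℝ) ^ (j0:ℕ)) ^ (-(s*p)) := by rw [hrj0]
      _ ≤ M * B ^ (-(s*p)) := by gcongr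
      _ = B := h2
  have hpart2 : ∑ j ∈ Finset.Ico j0 N, ((S.filter (fun i => i.1 = j)).card : ℝ)
      ≤ B * (1/(1-r)) := by
    calc ∑ j ∈ Finset.Ico j0 N, ((S.filter (fun i => i.1 = j)).card : ℝ)
        ≤ ∑ j ∈ Finset.Ico j0 N, M * r ^ j :=
          Finset.sum_le_sum fun j _ => (key j).2
      _ = M * r ^ j0 * ∑ i ∈ Finset.range (N - j0), r ^ i := by
          rw [Finset.sum_Ico_eq_sum_range, Finset.mul_sum]
          exact Finset.sum_congr rfl fun i _ => by rw [pow_add]; ring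
      _ ≤ M * r ^ j0 * (1/(1-r)) := by
          have hg : ∑ i ∈ Finset.range (N - j0), r ^ i ≤ 1/(1-r) := by
            rw [geom_sum_eq hr1.ne]
            have e : (r ^ (N - j0) - 1)/(r - 1) = (1 - r ^ (N - j0))/(1 - r) := by
              rw [div_eq_div_iff (sub_ne_zero.mpr hr1.ne) h1r.ne']
              ring
            rw [e]
            have hpw : (0:ℝ) ≤ r ^ (N - j0) := by positivity
            gcongr
            linarith
          exact mul_le_mul_of_nonneg_left hg (by positivity)
      _ ≤ B * (1/(1-r)) := by
          apply mul_le_mul_of_nonneg_right hMr (by positivity)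
  calc (S.card : ℝ) = _ := hsplit
    _ ≤ 2 * B + B * (1/(1-r)) := add_le_add hpart1 hpart2
    _ = (2 + 1/(1-r)) * B := by ring
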